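/- For the Lamplighter group G acting on X = (ℤ∪{∞})×{0,1}: if (F_n') is a sequence of finite subsets of G which is right Følner (|F_n' f_b Δ F_n'| / |F_n'| → 0 for all b ∈ ℤ), then lim_n |{σ^a∘f_𝐛 ∈ F_n' : b ∈ 𝐛}| / |F_n'| = 1/2 for every b ∈ ℤ, where the elements of F_n' are written in the normal form σ^a ∘ f_𝐛. -/

import Mathlib

open Filter Topology

noncomputable section

/-- The shift `s ↦ s - 1` on the one-point compactification `ℤ ∪ {∞}`, fixing `∞`. -/
def shiftOP : Equiv.Perm (OnePoint ℤ) :=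
  (Equiv.optionCongr (Equiv.subRight (1 : ℤ)) : Equiv.Perm (Option ℤ))

/-- The phase space `X = (ℤ ∪ {∞}) × {0,1}`. -/
abbrev LampX : Type := OnePoint ℤ × Bool

/-- The transposition `f` swapping `(0,1)` and `(0,0)`. -/
def lampF : Equiv.Perm LampX :=
  haveI : DecidableEq LampX := Classical.decEq _
  Equiv.swap (((0 : ℤ) : OnePoint ℤ), true) (((0 : ℤ) : OnePoint ℤ), false)

/-- The shift `σ` on `X`, decrementing the integer coordinate. -/
def lampSigma : Equiv.Perm LampX := (shiftOP).prodCongr (Equiv.refl Bool)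

/-- `f_n = σ^{-n} ∘ f ∘ σ^n`. -/
def lampfn (n : ℤ) : Equiv.Perm LampX := lampSigma ^ (-n) * lampF * lampSigma ^ n

/-- The Lamplighter group `G = ⟨f, σ⟩`. -/
def lampG : Subgroup (Equiv.Perm LampX) := Subgroup.closure {lampF, lampSigma}

/-- For `l = [b_1, …, b_k]`, the composition `f_{b_k} ∘ ⋯ ∘ f_{b_1}`. -/
def lampProd (l : List ℤ) : Equiv.Perm LampX := (l.reverse.map lampfn).prod

open scoped symmDiff

-- basic computations
lemma shiftOP_coe (m : ℤ) : shiftOP (m : OnePoint ℤ) = ((m - 1 : ℤ) : OnePoint ℤ) := by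
  rfl

lemma shiftOP_inv_coe (m : ℤ) : shiftOP⁻¹ (m : OnePoint ℤ) = ((m + 1 : ℤ) : OnePoint ℤ) := by
  rfl

lemma shiftOP_zpow_coe (k : ℤ) : ∀ m : ℤ,
    (shiftOP ^ k) (m : OnePoint ℤ) = ((m - k : ℤ) : OnePoint ℤ) := by
  induction k using Int.induction_on with
  | zero => simp
  | succ k ih =>
      intro m
      rw [zpow_add_one, Equiv.Perm.mul_apply, shiftOP_coe, ih]; ring_nf
  | pred k ih =>
      intro m
      rw [zpow_sub_one, Equiv.Perm.mul_apply, shiftOP_inv_coe, ih]; ring_nf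

lemma lampSigma_inv_apply (x : LampX) : lampSigma⁻¹ x = (shiftOP⁻¹ x.1, x.2) := by
  rfl

lemma lampSigma_zpow_apply (k : ℤ) : ∀ x : LampX,
    (lampSigma ^ k) x = ((shiftOP ^ k) x.1, x.2) := by
  induction k using Int.induction_on with
  | zero => simp
  | succ k ih =>
      intro x
      rw [zpow_add_one, zpow_add_one, Equiv.Perm.mul_apply, Equiv.Perm.mul_apply, ih]
      rfl
  | pred k ih =>
      intro x
      rw [zpow_sub_one, zpow_sub_one, Equiv.Perm.mul_apply, Equiv.Perm.mul_apply, ih]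
      rfl

lemma lampF_apply_zero (t : Bool) : lampF (((0:ℤ) : OnePoint ℤ), t) = (((0:ℤ) : OnePoint ℤ), !t) := by
  classical
  cases t <;> simp [lampF, Equiv.swap_apply_def]

lemma lampfn_apply_self (b : ℤ) (t : Bool) :
    lampfn b ((b : OnePoint ℤ), t) = ((b : OnePoint ℤ), !t) := by
  simp only [lampfn, Equiv.Perm.mul_apply, lampSigma_zpow_apply, shiftOP_zpow_coe]
  rw [show ((b - b : ℤ) : OnePoint ℤ) = ((0:ℤ) : OnePoint ℤ) by norm_num,
    lampF_apply_zero]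
  simp [← zpow_neg, shiftOP_zpow_coe]


lemma lampF_apply_ne {s : OnePoint ℤ} (h : s ≠ ((0:ℤ) : OnePoint ℤ)) (t : Bool) :
    lampF (s, t) = (s, t) := by
  simp [lampF, Equiv.swap_apply_def, Prod.ext_iff, h]

def LampOK (g : Equiv.Perm LampX) : Prop :=
  ∀ s : OnePoint ℤ, (g (s, true)).1 = (g (s, false)).1 ∧ (g (s, true)).2 = !(g (s, false)).2

lemma lampOK_of_mem {g : Equiv.Perm LampX} (hg : g ∈ lampG) : LampOK g := by
  induction hg using Subgroup.closure_induction with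
  | mem x hx =>
      rcases hx with rfl | rfl
      · intro s
        by_cases h : s = ((0:ℤ) : OnePoint ℤ)
        · subst h; rw [lampF_apply_zero, lampF_apply_zero]; simp
        · rw [lampF_apply_ne h, lampF_apply_ne h]; simp
      · intro s; simp [lampSigma]
  | one => intro s; simp
  | mul x y hx hy ihx ihy =>
      intro s
      rcases hq : y (s, false) with ⟨c, d⟩
      have hyt : y (s, true) = (c, !d) := by
        rcases ihy s with ⟨h1, h2⟩; rw [hq] at h1 h2; exact Prod.ext h1 h2
      simp only [Equiv.Perm.mul_apply, hyt, hq]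
      rcases ihx c with ⟨g1, g2⟩
      cases d
      · simpa using ⟨g1, g2⟩
      · simp only [Bool.not_true]
        refine ⟨g1.symm, ?_⟩
        rw [g2]; simp
  | inv x hx ihx =>
      intro s
      rcases h : x⁻¹ (s, true) with ⟨a1, a2⟩
      rcases h' : x⁻¹ (s, false) with ⟨b1, b2⟩
      have hxa : x (a1, a2) = (s, true) := by rw [← h, ← Equiv.Perm.mul_apply, mul_inv_cancel, Equiv.Perm.one_apply]
      have hxb : x (b1, b2) = (s, false) := by rw [← h', ← Equiv.Perm.mul_apply, mul_inv_cancel, Equiv.Perm.one_apply]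
      rcases ihx a1 with ⟨k1, k2⟩
      have key : x (a1, !a2) = (s, false) := by
        cases hA : a2
        · rw [hA] at hxa
          simp only [Bool.not_false]
          refine Prod.ext ?_ ?_
          · simp [k1, hxa]
          · simp [k2, hxa]
        · rw [hA] at hxa
          simp only [Bool.not_true]
          refine Prod.ext ?_ ?_
          · simp [← k1, hxa]
          · have h2 : (x (a1, true)).2 = true := by rw [hxa]
            rw [k2] at h2
            simp only [Bool.not_eq_true'] at h2
            simp [h2]
      have hba : (b1, b2) = (a1, !a2) := x.injective (by rw [hxb, key])
      injection hba with e1 e2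
      subst e1; subst e2
      simp


lemma lamp_toggle {g : Equiv.Perm LampX} (hg : LampOK g) (b : ℤ) :
    ((g * lampfn b) ((b : OnePoint ℤ), true)).2 = !(g ((b : OnePoint ℤ), true)).2 := by
  rw [Equiv.Perm.mul_apply, lampfn_apply_self]
  simp only [Bool.not_true]
  rw [(hg (b : OnePoint ℤ)).2]
  simp

lemma lamp_card_aux [DecidableEq (Equiv.Perm LampX)] (t : Equiv.Perm LampX)
    (F : Finset (Equiv.Perm LampX)) (p : Equiv.Perm LampX → Prop) [DecidablePred p]
    (hp : ∀ g ∈ F, (p (g * t) ↔ ¬ p g)) :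
    (F.filter p).card ≤ (F.filter (fun g => ¬ p g)).card + ((F.image (· * t)) ∆ F).card := by
  have himg : ((F.filter p).image (· * t)).card = (F.filter p).card :=
    Finset.card_image_of_injOn (fun a _ c _ h => mul_right_cancel h)
  have hsub : (F.filter p).image (· * t) ⊆
      (F.filter (fun g => ¬ p g)) ∪ ((F.image (· * t)) ∆ F) := by
    intro x hx
    simp only [Finset.mem_image, Finset.mem_filter] at hx
    obtain ⟨g, ⟨hgF, hgp⟩, rfl⟩ := hx
    by_cases hF : g * t ∈ F
    · exact Finset.mem_union_left _
        (Finset.mem_filter.2 ⟨hF, fun hpt => (hp g hgF).1 hpt hgp⟩)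
    · exact Finset.mem_union_right _
        (Finset.mem_symmDiff.2 (Or.inl ⟨Finset.mem_image_of_mem _ hgF, hF⟩))
  calc (F.filter p).card = ((F.filter p).image (· * t)).card := himg.symm
    _ ≤ ((F.filter (fun g => ¬ p g)) ∪ ((F.image (· * t)) ∆ F)).card :=
        Finset.card_le_card hsub
    _ ≤ _ := Finset.card_union_le _ _

lemma lamp_key [inst : DecidableEq (Equiv.Perm LampX)] (b : ℤ) (Fn : Finset (Equiv.Perm LampX))
    (hne : Fn.Nonempty) (hOK : ∀ g ∈ Fn, LampOK g) :
    ‖((Fn.filter (fun g => (g (((b : ℤ) : OnePoint ℤ), true)).2 = false)).card : ℝ) / Fn.card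
        - 1/2‖ ≤ (((Fn.image (· * lampfn b)) ∆ Fn).card : ℝ) / Fn.card / 2 := by
  set p : Equiv.Perm LampX → Prop :=
    fun g => (g (((b : ℤ) : OnePoint ℤ), true)).2 = false with hpdef
  have hptog : ∀ g ∈ Fn, (p (g * lampfn b) ↔ ¬ p g) := by
    intro g hg
    have htog := lamp_toggle (hOK g hg) b
    simp only [hpdef, htog]
    cases h : (g (((b : ℤ) : OnePoint ℤ), true)).2 <;> simp
  set A := (Fn.filter p).card with hA
  set B := (Fn.filter (fun g => ¬ p g)).card with hB
  set D := (((Fn.image (· * lampfn b)) ∆ Fn).card) with hD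
  have hNsum : A + B = Fn.card :=
    Finset.card_filter_add_card_filter_not (p := p)
  have hApos : 0 < Fn.card := Finset.card_pos.2 hne
  have h1 : A ≤ B + D := lamp_card_aux (lampfn b) Fn p hptog
  have h2 : B ≤ A + D := by
    have h2' := lamp_card_aux (lampfn b) Fn (fun g => ¬ p g)
      (fun g hg => by simp [hptog g hg])
    rwa [Finset.filter_congr (fun g _ => by tauto : ∀ g ∈ Fn, (¬ ¬ p g) ↔ p g)] at h2'
  have hNR : (Fn.card : ℝ) = (A : ℝ) + B := by exact_mod_cast hNsum.symm
  have hNpos : (0:ℝ) < Fn.card := by exact_mod_cast hApos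
  have heq : (A : ℝ) / Fn.card - 1/2 = ((A : ℝ) - B) / (2 * Fn.card) := by
    field_simp
    rw [hNR]; ring
  have h1r : (A : ℝ) ≤ B + D := by exact_mod_cast h1
  have h2r : (B : ℝ) ≤ A + D := by exact_mod_cast h2
  have habs : |(A : ℝ) - B| ≤ D := abs_le.2 ⟨by linarith, by linarith⟩
  rw [Real.norm_eq_abs, heq, abs_div,
    abs_of_pos (show (0:ℝ) < 2 * Fn.card by positivity)]
  calc |(A : ℝ) - B| / (2 * Fn.card) ≤ (D : ℝ) / (2 * Fn.card) := by gcongr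
    _ = ((D : ℝ) / Fn.card) / 2 := by ring


/-- If `(F_n')` is a right Følner sequence of finite subsets of the Lamplighter group `G`
(i.e. `|F_n' f_b Δ F_n'|/|F_n'| → 0` for all `b ∈ ℤ`), then the proportion of elements
`σ^a ∘ f_𝐛 ∈ F_n'` with `b ∈ 𝐛` tends to `1/2` for every `b ∈ ℤ`.  (Here `b ∈ 𝐛` is
expressed intrinsically: `g = σ^a ∘ f_𝐛` satisfies `b ∈ 𝐛` iff `g` maps `(b,1)` into
`(ℤ∪{∞}) × {0}`.) -/
theorem lamplighter_right_Folner_half :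
    ∀ F : ℕ → Finset (Equiv.Perm LampX),
    haveI : DecidableEq (Equiv.Perm LampX) := Classical.decEq _
    (∀ n, (F n).Nonempty) →
    (∀ n, ∀ g ∈ F n, g ∈ lampG) →
    (∀ b : ℤ, Tendsto
      (fun n => ((((F n).image (· * lampfn b)) ∆ (F n)).card : ℝ) / (F n).card)
      atTop (𝓝 0)) →
    ∀ b : ℤ, Tendsto
      (fun n => (((F n).filter
          (fun g => (g (((b : ℤ) : OnePoint ℤ), true)).2 = false)).card : ℝ) / (F n).card)
      atTop (𝓝 (1/2)) := by
  intro F hne hmem hFol b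
  have hFb := (hFol b).div_const 2
  rw [zero_div] at hFb
  rw [← tendsto_sub_nhds_zero_iff]
  exact squeeze_zero_norm
    (fun n => lamp_key (inst := Classical.decEq _) b (F n) (hne n) (fun g hg => lampOK_of_mem (hmem n g hg))) hFb

end
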